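/- For the 4-prism graph P₄, one has OCN(P₄) ≤ 32. -/

import Mathlib

set_option maxRecDepth 100000


noncomputable section

/-- A rectilinear drawing of a finite simple graph `G`: an injective map of the
vertices to points of the plane `ℝ × ℝ` in general position (no three collinear);
each edge is drawn as the straight-line segment between the images of its endpoints. -/
structure OrchardDrawing {V : Type*} (G : SimpleGraph V) where
  pos : V → ℝ × ℝ
  inj : Function.Injective pos
  genPos : ∀ u v w : V, u ≠ v → u ≠ w → v ≠ w →
    ¬ Collinear ℝ ({pos u, pos v, pos w} : Set (ℝ × ℝ))

/-- The number of Orchard crossings of a drawing: the number of pairs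
`(e, e')` where `e = {s,t}` is an edge of `G` and `e' = {u,v}` is an unordered pair of
distinct vertices with `{u,v} ≠ {s,t}` such that the straight line through the images of
`u` and `v` meets the open segment joining the images of `s` and `t`.
This equals `Σ_{(s,t) ∈ E} c(s,t)`. -/
def orchardCrossings {V : Type*} {G : SimpleGraph V} (D : OrchardDrawing G) : ℕ :=
  Nat.card {q : Sym2 V × Sym2 V //
    q.1 ∈ G.edgeSet ∧ q.2 ≠ q.1 ∧ ¬ q.2.IsDiag ∧
    ∃ u v s t : V, q.2 = s(u, v) ∧ q.1 = s(s, t) ∧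
      ∃ p ∈ openSegment ℝ (D.pos s) (D.pos t),
        Collinear ℝ ({D.pos u, D.pos v, p} : Set (ℝ × ℝ))}

/-- The Orchard crossing number of a finite simple graph: the minimum of the number of
Orchard crossings over all rectilinear drawings. -/
def OCN {V : Type*} [Fintype V] (G : SimpleGraph V) : ℕ :=
  sInf {m : ℕ | ∃ D : OrchardDrawing G, orchardCrossings D = m}

/-- The `n`-prism graph (for `n ≥ 3`): vertices `(i, k)` with `i : Fin n`, `k : Fin 2`;
edges are the two cycles `(i, k)–(i+1 mod n, k)` (for `k = 0, 1`) together with the rungs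
`(i, 0)–(i, 1)`. -/
def prismGraph (n : ℕ) : SimpleGraph (Fin n × Fin 2) :=
  SimpleGraph.fromRel (fun u v =>
    (u.2 = v.2 ∧ ((u.1 : ℕ) + 1) % n = (v.1 : ℕ)) ∨ (u.1 = v.1 ∧ u.2 = 0 ∧ v.2 = 1))

-- auxiliary

def crossR (a b c : ℝ × ℝ) : ℝ := (b.1-a.1)*(c.2-a.2)-(b.2-a.2)*(c.1-a.1)

lemma collinear_imp_cross (a b c : ℝ × ℝ) (h : Collinear ℝ ({a,b,c} : Set (ℝ × ℝ))) :
    crossR a b c = 0 := by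
  rw [collinear_iff_exists_forall_eq_smul_vadd] at h
  obtain ⟨p₀, v, hv⟩ := h
  obtain ⟨r1, h1⟩ := hv a (by simp)
  obtain ⟨r2, h2⟩ := hv b (by simp)
  obtain ⟨r3, h3⟩ := hv c (by simp)
  subst h1 h2 h3
  simp only [crossR, Prod.fst_add, Prod.snd_add, Prod.smul_fst, Prod.smul_snd,
    vadd_eq_add, smul_eq_mul]
  ring

lemma cross_imp_collinear (a b c : ℝ × ℝ) (hab : a ≠ b) (h : crossR a b c = 0) :
    Collinear ℝ ({a,b,c} : Set (ℝ × ℝ)) := by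
  rw [collinear_iff_exists_forall_eq_smul_vadd]
  refine ⟨a, b - a, fun p hp => ?_⟩
  have hv : b - a ≠ 0 := sub_ne_zero.2 (Ne.symm hab)
  rcases hp with rfl | rfl | rfl
  · exact ⟨0, by simp⟩
  · exact ⟨1, by ext <;> simp⟩
  unfold crossR at h
  by_cases h1 : b.1 - a.1 = 0
  · have h2 : b.2 - a.2 ≠ 0 := by
      intro h2; apply hv; ext <;> simp only [Prod.fst_sub, Prod.snd_sub, Prod.fst_zero,
        Prod.snd_zero] <;> linarith
    have hc1 : p.1 - a.1 = 0 := by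
      have h' : (b.2-a.2)*(p.1-a.1) = 0 := by rw [h1] at h; linarith
      rcases mul_eq_zero.1 h' with h' | h'
      · exact absurd h' h2
      · exact h'
    refine ⟨(p.2 - a.2)/(b.2 - a.2), ?_⟩
    ext
    · simp only [vadd_eq_add, Prod.fst_add, Prod.smul_fst, smul_eq_mul, Prod.fst_sub]
      rw [h1]; ring_nf; linarith
    · simp only [vadd_eq_add, Prod.snd_add, Prod.smul_snd, smul_eq_mul, Prod.snd_sub]
      field_simp
      ring
  · refine ⟨(p.1 - a.1)/(b.1 - a.1), ?_⟩
    ext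
    · simp only [vadd_eq_add, Prod.fst_add, Prod.smul_fst, smul_eq_mul, Prod.fst_sub]
      field_simp
      ring
    · simp only [vadd_eq_add, Prod.snd_add, Prod.smul_snd, smul_eq_mul, Prod.snd_sub]
      rw [div_mul_eq_mul_div, eq_comm, div_add' _ _ _ h1, div_eq_iff h1]
      nlinarith [h]

lemma cross_affine (u v s t : ℝ × ℝ) (a b : ℝ) (hab : a + b = 1) :
    crossR u v (a • s + b • t) = a * crossR u v s + b * crossR u v t := by
  have hb : b = 1 - a := by linarith
  subst hb
  simp only [crossR, Prod.fst_add, Prod.snd_add, Prod.smul_fst, Prod.smul_snd, smul_eq_mul]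
  ring


abbrev V4 := Fin 4 × Fin 2

def pt (p : V4) : ℤ × ℤ :=
  ![![((-1 : ℤ),(-4 : ℤ)),((-4 : ℤ),(3 : ℤ))],
    ![((1 : ℤ),(5 : ℤ)),((-1 : ℤ),(5 : ℤ))],
    ![((3 : ℤ),(4 : ℤ)),((4 : ℤ),(2 : ℤ))],
    ![((3 : ℤ),(-3 : ℤ)),((4 : ℤ),(1 : ℤ))]] p.1 p.2

def crossZ (a b c : ℤ × ℤ) : ℤ := (b.1-a.1)*(c.2-a.2)-(b.2-a.2)*(c.1-a.1)

def posR (v : V4) : ℝ × ℝ := (((pt v).1 : ℝ), ((pt v).2 : ℝ))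

lemma crossR_posR (u v w : V4) :
    crossR (posR u) (posR v) (posR w) = (crossZ (pt u) (pt v) (pt w) : ℝ) := by
  simp only [crossR, crossZ, posR]
  push_cast
  ring

lemma pt_inj : Function.Injective pt := by decide

lemma posR_inj : Function.Injective posR := by
  intro a b h
  apply pt_inj
  simp only [posR, Prod.ext_iff] at h ⊢
  exact_mod_cast h

lemma crossZ_ne (u v w : V4) (huv : u ≠ v) (huw : u ≠ w) (hvw : v ≠ w) :
    crossZ (pt u) (pt v) (pt w) ≠ 0 := by revert huv huw hvw; revert u v w; decide

instance : DecidableRel (prismGraph 4).Adj := fun a b =>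
  decidable_of_iff' _ (SimpleGraph.fromRel_adj _ a b)

def myDrawing : OrchardDrawing (prismGraph 4) where
  pos := posR
  inj := posR_inj
  genPos := by
    intro u v w huv huw hvw hcol
    have h := collinear_imp_cross _ _ _ hcol
    rw [crossR_posR] at h
    exact crossZ_ne u v w huv huw hvw (by exact_mod_cast h)

def Tfin : Finset ((V4 × V4) × (V4 × V4)) :=
  Finset.univ.filter fun x =>
    (prismGraph 4).Adj x.1.1 x.1.2 ∧ s(x.2.1, x.2.2) ≠ s(x.1.1, x.1.2) ∧
      crossZ (pt x.2.1) (pt x.2.2) (pt x.1.1) * crossZ (pt x.2.1) (pt x.2.2) (pt x.1.2) < 0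

def Ffin : Finset (Sym2 V4 × Sym2 V4) :=
  Tfin.image fun x => (s(x.1.1, x.1.2), s(x.2.1, x.2.2))

set_option maxRecDepth 100000 in
set_option maxHeartbeats 4000000 in
lemma Ffin_card : Ffin.card ≤ 32 := by decide

lemma key_mem (q : Sym2 V4 × Sym2 V4)
    (hq : q.1 ∈ (prismGraph 4).edgeSet ∧ q.2 ≠ q.1 ∧ ¬ q.2.IsDiag ∧
      ∃ u v s t : V4, q.2 = s(u, v) ∧ q.1 = s(s, t) ∧
        ∃ p ∈ openSegment ℝ (posR s) (posR t),
          Collinear ℝ ({posR u, posR v, p} : Set (ℝ × ℝ))) : q ∈ Ffin := by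
  obtain ⟨e, f⟩ := q
  obtain ⟨hedge, hne, hdiag, u, v, s, t, h2, h1, p, hp, hcol⟩ := hq
  simp only at h1 h2 hne hdiag hedge
  subst h1 h2
  have hst : (prismGraph 4).Adj s t := hedge
  have hstne : s ≠ t := hst.ne
  have huv : u ≠ v := fun h => hdiag (Sym2.mk_isDiag_iff.2 h)
  obtain ⟨a, b, ha, hb, hab, rfl⟩ := hp
  have hc : crossR (posR u) (posR v) (a • posR s + b • posR t) = 0 :=
    collinear_imp_cross _ _ _ hcol
  rw [cross_affine _ _ _ _ a b hab, crossR_posR, crossR_posR] at hc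
  set cs : ℤ := crossZ (pt u) (pt v) (pt s) with hcs_def
  set ct : ℤ := crossZ (pt u) (pt v) (pt t) with hct_def
  -- not both zero
  have hA : ¬ (cs = 0 ∧ ct = 0) := by
    rintro ⟨hcs, hct⟩
    have hs : s = u ∨ s = v := by
      by_contra hcon
      push_neg at hcon
      exact crossZ_ne u v s huv (Ne.symm hcon.1) (Ne.symm hcon.2) hcs
    have ht : t = u ∨ t = v := by
      by_contra hcon
      push_neg at hcon
      exact crossZ_ne u v t huv (Ne.symm hcon.1) (Ne.symm hcon.2) hct
    rcases hs with rfl | rfl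
    · rcases ht with rfl | rfl
      · exact hstne rfl
      · exact hne rfl
    · rcases ht with rfl | rfl
      · exact hne (Sym2.eq_swap)
      · exact hstne rfl
  have hcs0 : cs ≠ 0 := by
    intro h0
    apply hA
    refine ⟨h0, ?_⟩
    rw [h0] at hc
    push_cast at hc
    have : (ct : ℝ) = 0 := by
      rcases mul_eq_zero.1 (by linarith : b * (ct : ℝ) = 0) with h' | h'
      · exact absurd h' (ne_of_gt hb)
      · exact h'
    exact_mod_cast this
  have hct0 : ct ≠ 0 := by
    intro h0
    apply hA
    refine ⟨?_, h0⟩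
    rw [h0] at hc
    push_cast at hc
    have : (cs : ℝ) = 0 := by
      rcases mul_eq_zero.1 (by linarith : a * (cs : ℝ) = 0) with h' | h'
      · exact absurd h' (ne_of_gt ha)
      · exact h'
    exact_mod_cast this
  have hsign : cs * ct < 0 := by
    have hctR : (ct : ℝ) ≠ 0 := Int.cast_ne_zero.2 hct0
    have hsq : (0 : ℝ) < (ct : ℝ) ^ 2 := by positivity
    have h2 : a * ((cs : ℝ) * (ct : ℝ)) = -(b * (ct : ℝ) ^ 2) := by
      linear_combination (ct : ℝ) * hc
    have : ((cs : ℝ) * (ct : ℝ)) < 0 := by nlinarith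
    exact_mod_cast this
  exact Finset.mem_image.2 ⟨((s, t), (u, v)),
    Finset.mem_filter.2 ⟨Finset.mem_univ _, hst, hne, hsign⟩, rfl⟩

lemma crossings_le : orchardCrossings myDrawing ≤ 32 := by
  unfold orchardCrossings
  have h1 : Nat.card {q : Sym2 V4 × Sym2 V4 // q ∈ Ffin} = Ffin.card := by
    rw [Nat.card_eq_fintype_card]
    exact Fintype.card_coe _
  calc Nat.card {q : Sym2 V4 × Sym2 V4 //
      q.1 ∈ (prismGraph 4).edgeSet ∧ q.2 ≠ q.1 ∧ ¬ q.2.IsDiag ∧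
      ∃ u v s t : V4, q.2 = s(u, v) ∧ q.1 = s(s, t) ∧
        ∃ p ∈ openSegment ℝ (myDrawing.pos s) (myDrawing.pos t),
          Collinear ℝ ({myDrawing.pos u, myDrawing.pos v, p} : Set (ℝ × ℝ))}
      ≤ Nat.card {q : Sym2 V4 × Sym2 V4 // q ∈ Ffin} := by
        apply Nat.card_le_card_of_injective (fun x => ⟨x.1, key_mem x.1 x.2⟩)
        intro x y h
        simpa [Subtype.ext_iff] using h
    _ = Ffin.card := h1
    _ ≤ 32 := Ffin_card

theorem OCN_prism_four : OCN (prismGraph 4) ≤ 32 := by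
  have h : OCN (prismGraph 4) ≤ orchardCrossings myDrawing :=
    Nat.sInf_le ⟨myDrawing, rfl⟩
  exact le_trans h crossings_le
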